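/- Let K be a cap body in E^3 with vertices {x_i}_{i=1}^m, and suppose the unit vectors v_1, …, v_k satisfy: (i) for each i = 1, …, m there is some j with v_j ∈ C(−x̂_i, π/2 − φ_i), where x̂_i = x_i/‖x_i‖ and φ_i = arccos(1/‖x_i‖); and (ii) the positive hull of {v_1, …, v_k} is all of E^3. Then the directions v_1, …, v_k illuminate K. -/
import Mathlib


open Metric Real Set RealInnerProductSpace

/-- The open spherical cap `C(ξ, ψ)` on the unit sphere `S² ⊂ E³` with center `ξ`
and radius `ψ`. -/
def openCap (ξ : EuclideanSpace ℝ (Fin 3)) (ψ : ℝ) : Set (EuclideanSpace ℝ (Fin 3)) :=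
  {y ∈ sphere (0 : EuclideanSpace ℝ (Fin 3)) 1 | Real.cos ψ < ⟪ξ, y⟫}

lemma aux_cap_compact (x : EuclideanSpace ℝ (Fin 3)) :
    IsCompact (convexHull ℝ (insert x (closedBall (0 : EuclideanSpace ℝ (Fin 3)) 1))) := by
  rw [convexHull_insert ⟨0, by simp⟩, (convex_closedBall _ _).convexHull_eq]
  have heq : convexJoin ℝ {x} (closedBall (0 : EuclideanSpace ℝ (Fin 3)) 1) =
      (fun q : ℝ × EuclideanSpace ℝ (Fin 3) => (1 - q.1) • x + q.1 • q.2) ''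
        (Icc (0:ℝ) 1 ×ˢ closedBall 0 1) := by
    ext z
    simp only [mem_convexJoin, mem_singleton_iff, exists_eq_left, mem_image, mem_prod]
    constructor
    · rintro ⟨b, hb, hz⟩
      rw [segment_eq_image] at hz
      obtain ⟨θ, hθ, hθz⟩ := hz
      exact ⟨(θ, b), ⟨hθ, hb⟩, hθz⟩
    · rintro ⟨⟨θ, b⟩, ⟨hθ, hb⟩, hz⟩
      refine ⟨b, hb, ?_⟩
      rw [segment_eq_image]
      exact ⟨θ, hθ, hz⟩
  rw [heq]
  exact ((isCompact_Icc.prod (isCompact_closedBall _ _)).image (by fun_prop))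

/-- Illumination criterion for cap bodies: if `K` is a cap body with vertices
`x₁, …, x_m` and the unit vectors `v₁, …, v_k` satisfy
(i) for each `i` some `vⱼ` lies in the open cap `C(−x̂ᵢ, π/2 − φᵢ)`, and
(ii) the positive hull of `{v₁, …, v_k}` is all of `E³`,
then the directions `v₁, …, v_k` illuminate `K`: every boundary point of `K` can be
moved into the interior of `K` along some `vⱼ`. -/
theorem cap_body_illumination_criterion
    (K : Set (EuclideanSpace ℝ (Fin 3)))
    (m : ℕ) (hm : 0 < m) (x : Fin m → EuclideanSpace ℝ (Fin 3))
    (hx : ∀ i, 1 < ‖x i‖)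
    (hK : K = ⋃ i, convexHull ℝ ({x i} ∪ closedBall 0 1))
    (hconv : Convex ℝ K)
    (k : ℕ) (v : Fin k → EuclideanSpace ℝ (Fin 3))
    (hv : ∀ j, ‖v j‖ = 1)
    (hcap : ∀ i, ∃ j, v j ∈
      openCap (-(‖x i‖⁻¹ • x i)) (Real.pi / 2 - Real.arccos (1 / ‖x i‖)))
    (hpos : ∀ y : EuclideanSpace ℝ (Fin 3),
      ∃ c : Fin k → ℝ, (∀ j, 0 < c j) ∧ y = ∑ j, c j • v j) :
    ∀ p ∈ frontier K, ∃ j, ∃ t : ℝ, 0 < t ∧ p + t • v j ∈ interior K := by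
  -- the unit ball is inside K, hence the open ball is inside the interior
  have hK0 : closedBall (0 : EuclideanSpace ℝ (Fin 3)) 1 ⊆ K := by
    rw [hK]
    intro y hy
    exact mem_iUnion.2 ⟨⟨0, hm⟩, subset_convexHull ℝ _ (Or.inr hy)⟩
  have hball : ball (0 : EuclideanSpace ℝ (Fin 3)) 1 ⊆ interior K :=
    interior_maximal (ball_subset_closedBall.trans hK0) isOpen_ball
  -- k is positive
  have hkpos : 0 < k := by
    rcases Nat.eq_zero_or_pos k with hk | hk
    · exfalso
      obtain ⟨c, hc, hsum⟩ := hpos (EuclideanSpace.single 0 1)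
      subst hk
      simp only [Finset.univ_eq_empty, Finset.sum_empty] at hsum
      have h1 : (EuclideanSpace.single (0 : Fin 3) (1:ℝ)) 0 = 0 := by rw [hsum]; rfl
      simp [EuclideanSpace.single_apply] at h1
    · exact hk
  -- K is closed
  have hKclosed : IsClosed K := by
    rw [hK]
    refine isClosed_iUnion_of_finite (fun i => ?_)
    rw [singleton_union]
    exact (aux_cap_compact (x i)).isClosed
  intro p hp
  have hpK : p ∈ K := by
    have := hp.1
    rwa [hKclosed.closure_eq] at this
  rcases le_or_gt ‖p‖ 1 with hple | hpgt
  · -- p is in the unit ball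
    rcases eq_or_ne p 0 with rfl | hp0
    · refine ⟨⟨0, hkpos⟩, 1/2, by norm_num, hball ?_⟩
      rw [mem_ball_zero_iff]
      rw [zero_add, norm_smul, hv]
      norm_num
    · obtain ⟨c, hc, hsum⟩ := hpos (-p)
      have hsum2 : ∑ j, c j * ⟪v j, p⟫ = -(‖p‖^2) := by
        calc ∑ j, c j * ⟪v j, p⟫ = ⟪∑ j, c j • v j, p⟫ := by
              rw [sum_inner]
              exact Finset.sum_congr rfl fun j _ => (real_inner_smul_left (v j) p (c j)).symm
          _ = ⟪-p, p⟫ := by rw [← hsum]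
          _ = -(‖p‖^2) := by
              rw [inner_neg_left, real_inner_self_eq_norm_sq]
      have hjx : ∃ j, ⟪v j, p⟫ < 0 := by
        by_contra hall
        push_neg at hall
        have h1 : (0:ℝ) ≤ ∑ j, c j * ⟪v j, p⟫ :=
          Finset.sum_nonneg fun j _ => mul_nonneg (hc j).le (hall j)
        have h2 : (0:ℝ) < ‖p‖^2 := pow_pos (norm_pos_iff.mpr hp0) 2
        rw [hsum2] at h1
        linarith
      obtain ⟨j, hj⟩ := hjx
      set t : ℝ := -⟪p, v j⟫ with ht_def
      have ht : 0 < t := by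
        rw [ht_def, real_inner_comm]
        linarith
      refine ⟨j, t, ht, hball ?_⟩
      rw [mem_ball_zero_iff]
      have hsq : ‖p + t • v j‖^2 = ‖p‖^2 - t^2 := by
        rw [norm_add_sq_real, real_inner_smul_right, norm_smul, hv j, mul_one, Real.norm_eq_abs, sq_abs]
        have hpv : ⟪p, v j⟫ = -t := by rw [ht_def, neg_neg]
        rw [hpv]; ring
      nlinarith [norm_nonneg (p + t • v j), pow_pos ht 2, mul_le_mul hple hple (norm_nonneg p) zero_le_one, sq_nonneg ‖p‖]
  · -- p is outside the unit ball: use the cap condition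
    rw [hK, mem_iUnion] at hpK
    obtain ⟨i, hpi⟩ := hpK
    rw [singleton_union, convexHull_insert ⟨0, by simp⟩,
      (convex_closedBall _ _).convexHull_eq, mem_convexJoin] at hpi
    obtain ⟨a, ha, b, hb, hseg⟩ := hpi
    rw [mem_singleton_iff] at ha
    subst ha
    obtain ⟨lam, mu, hlam, hmu, hlm, hcomb⟩ := hseg
    -- unpack the cap condition
    obtain ⟨j, hj⟩ := hcap i
    set R : ℝ := ‖x i‖ with hR_def
    have hR1 : 1 < R := hx i
    have hR0 : 0 < R := by linarith
    have hj2 := hj.2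
    rw [Real.cos_pi_div_two_sub, Real.sin_arccos, inner_neg_left,
      real_inner_smul_left] at hj2
    set s : ℝ := -⟪x i, v j⟫ with hs_def
    have hlt : Real.sqrt (1 - (1/R)^2) < R⁻¹ * s := by
      rw [hs_def]
      simpa [mul_neg] using hj2
    have hs0 : 0 < s := by
      have h2 : 0 < R⁻¹ * s := lt_of_le_of_lt (Real.sqrt_nonneg _) hlt
      have h4 := mul_pos h2 hR0
      have h5 : R⁻¹ * s * R = s := by field_simp
      rw [h5] at h4
      exact h4
    have h0 : (0:ℝ) ≤ 1 - (1/R)^2 := by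
      have : (1/R)^2 ≤ 1 := by
        rw [sq_le_one_iff_abs_le_one, abs_of_pos (by positivity : (0:ℝ) < 1/R)]
        rw [div_le_one hR0]; linarith
      linarith
    have h2 : R * Real.sqrt (1 - (1/R)^2) < s := by
      have := mul_lt_mul_of_pos_left hlt hR0
      rwa [← mul_assoc, mul_inv_cancel₀ (ne_of_gt hR0), one_mul] at this
    have h3 : (R * Real.sqrt (1 - (1/R)^2))^2 = R^2 - 1 := by
      rw [mul_pow, Real.sq_sqrt h0]
      field_simp
    have hssq : R^2 - 1 < s^2 := by
      nlinarith [mul_nonneg hR0.le (Real.sqrt_nonneg (1 - (1/R)^2))]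
    -- x i + s • v j lies in the open unit ball
    have hxs : ‖x i + s • v j‖^2 = R^2 - s^2 := by
      rw [norm_add_sq_real, real_inner_smul_right, norm_smul, hv j, mul_one, Real.norm_eq_abs, sq_abs]
      have hpv : ⟪x i, v j⟫ = -s := by rw [hs_def, neg_neg]
      rw [hpv, ← hR_def]; ring
    have hxball : x i + s • v j ∈ ball (0 : EuclideanSpace ℝ (Fin 3)) 1 := by
      rw [mem_ball_zero_iff]
      nlinarith [norm_nonneg (x i + s • v j)]
    -- the coefficient of the vertex is positive
    have hlam0 : 0 < lam := by
      rcases hlam.lt_or_eq with h | h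
      · exact h
      · exfalso
        have hmu1 : mu = 1 := by linarith
        rw [← h, hmu1, zero_smul, zero_add, one_smul] at hcomb
        rw [mem_closedBall_zero_iff] at hb
        rw [hcomb] at hb
        linarith
    refine ⟨j, lam * s, mul_pos hlam0 hs0, ?_⟩
    have heq : p + (lam * s) • v j = lam • (x i + s • v j) + mu • b := by
      rw [← hcomb]
      module
    rw [heq]
    exact hconv.combo_interior_closure_mem_interior (hball hxball)
      (subset_closure (hK0 hb)) hlam0 hmu hlm
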